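/- Let M, m, N : ℕ with N ≤ m and m + N ≤ M, and let V = Finset (Fin M) → ℂ carry the inner product making the basis (e_S) orthonormal, with Jordan–Wigner operators c_k, d_k. Let Ω : Fin M → ℝ and H = ∑_{k : Fin M} Ω_k (c_k ∘ d_k) (so H e_S = (∑_{k ∈ S} Ω_k) e_S). Let Φ = (1/√2)(e_{S₁} + e_{S₂}) where S₁ = {k : Fin M | (k:ℕ) < N} and S₂ = {k : Fin M | m ≤ (k:ℕ) ∧ (k:ℕ) < m + N}. Then 4·(⟪Φ, H(HΦ)⟫ − ⟪Φ, HΦ⟫²) = (∑_{k<N} (Ω_{m+k} − Ω_k))². -/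

import Mathlib

open scoped BigOperators

/-- The fermionic Fock space over `M` modes. -/
abbrev FockSpace (M : ℕ) : Type := Finset (Fin M) → ℂ

/-- The inner product on the Fock space making the basis `(e_S)` orthonormal. -/
noncomputable def fockInner {M : ℕ} (f g : FockSpace M) : ℂ :=
  ∑ S, starRingEnd ℂ (f S) * g S

/-- The Jordan–Wigner creation operator `c_k`. -/
noncomputable def crea {M : ℕ} (k : Fin M) : FockSpace M →ₗ[ℂ] FockSpace M :=
  (Pi.basisFun ℂ (Finset (Fin M))).constr ℂ fun S =>
    if k ∈ S then 0
    else ((-1 : ℂ) ^ (S.filter fun j => j < k).card) • (Pi.single (insert k S) (1 : ℂ) : FockSpace M)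

/-- The Jordan–Wigner annihilation operator `d_k`. -/
noncomputable def annih {M : ℕ} (k : Fin M) : FockSpace M →ₗ[ℂ] FockSpace M :=
  (Pi.basisFun ℂ (Finset (Fin M))).constr ℂ fun S =>
    if k ∈ S then ((-1 : ℂ) ^ (S.filter fun j => j < k).card) • (Pi.single (S.erase k) (1 : ℂ) : FockSpace M)
    else 0

/-- The quadratic Hamiltonian `H = ∑_k Ω_k a_k† a_k`. -/
noncomputable def Ham (M : ℕ) (Ω : Fin M → ℝ) : FockSpace M →ₗ[ℂ] FockSpace M :=
  ∑ k : Fin M, ((Ω k : ℝ) : ℂ) • (crea k ∘ₗ annih k)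

lemma single_eq_basisFun {M : ℕ} (S : Finset (Fin M)) :
    (Pi.single S (1:ℂ) : FockSpace M) = Pi.basisFun ℂ (Finset (Fin M)) S := by
  simp [Pi.basisFun_apply, Pi.single]

lemma crea_annih_single {M : ℕ} (k : Fin M) (S : Finset (Fin M)) :
    (crea k ∘ₗ annih k) (Pi.single S (1:ℂ) : FockSpace M)
      = if k ∈ S then (Pi.single S (1:ℂ) : FockSpace M) else 0 := by
  rw [LinearMap.comp_apply, single_eq_basisFun, annih, Module.Basis.constr_basis]
  by_cases h : k ∈ S
  · simp only [h, if_true, map_smul]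
    rw [single_eq_basisFun, crea, Module.Basis.constr_basis]
    have hk : k ∉ S.erase k := Finset.notMem_erase k S
    simp only [hk, if_false]
    have hf : ((S.erase k).filter fun j => j < k) = S.filter fun j => j < k := by
      rw [Finset.filter_erase]
      exact Finset.erase_eq_of_notMem (by simp)
    rw [hf, Finset.insert_erase h, smul_smul, ← pow_add, ← two_mul, pow_mul]
    norm_num
  · simp [h]

lemma ham_single {M : ℕ} (Ω : Fin M → ℝ) (S : Finset (Fin M)) :
    Ham M Ω (Pi.single S (1:ℂ) : FockSpace M)
      = ((∑ k ∈ S, (Ω k : ℂ))) • (Pi.single S (1:ℂ) : FockSpace M) := by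
  rw [Ham, LinearMap.sum_apply]
  simp only [LinearMap.smul_apply, crea_annih_single, smul_ite, smul_zero]
  rw [Finset.sum_ite_mem, Finset.univ_inter, ← Finset.sum_smul]

lemma fockInner_single_left {M : ℕ} (S : Finset (Fin M)) (f : FockSpace M) :
    fockInner (Pi.single S (1:ℂ) : FockSpace M) f = f S := by
  rw [fockInner]
  simp [Pi.single_apply]

lemma fockInner_smul_left {M : ℕ} (a : ℂ) (f g : FockSpace M) :
    fockInner (a • f) g = starRingEnd ℂ a * fockInner f g := by
  simp [fockInner, Finset.mul_sum, mul_assoc]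

lemma fockInner_add_left {M : ℕ} (f f' g : FockSpace M) :
    fockInner (f + f') g = fockInner f g + fockInner f' g := by
  simp [fockInner, add_mul, Finset.sum_add_distrib]

lemma key {M : ℕ} (Ω : Fin M → ℝ) (S T : Finset (Fin M)) (hST : S ≠ T) :
    4 * (fockInner (((Real.sqrt 2 : ℝ) : ℂ)⁻¹ • ((Pi.single S (1:ℂ) : FockSpace M) + (Pi.single T (1:ℂ) : FockSpace M)))
          (Ham M Ω (Ham M Ω (((Real.sqrt 2 : ℝ) : ℂ)⁻¹ • ((Pi.single S (1:ℂ) : FockSpace M) + (Pi.single T (1:ℂ) : FockSpace M)))))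
        - (fockInner (((Real.sqrt 2 : ℝ) : ℂ)⁻¹ • ((Pi.single S (1:ℂ) : FockSpace M) + (Pi.single T (1:ℂ) : FockSpace M)))
          (Ham M Ω (((Real.sqrt 2 : ℝ) : ℂ)⁻¹ • ((Pi.single S (1:ℂ) : FockSpace M) + (Pi.single T (1:ℂ) : FockSpace M))))) ^ 2)
      = ((∑ k ∈ T, (Ω k : ℂ)) - ∑ k ∈ S, (Ω k : ℂ)) ^ 2 := by
  set r : ℂ := ((Real.sqrt 2 : ℝ) : ℂ) with hr
  set ES : ℂ := ∑ k ∈ S, (Ω k : ℂ)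
  set ET : ℂ := ∑ k ∈ T, (Ω k : ℂ)
  have hr2 : r * r = 2 := by
    have h : Real.sqrt 2 * Real.sqrt 2 = 2 := Real.mul_self_sqrt (by norm_num)
    rw [hr, ← Complex.ofReal_mul, h]
    norm_num
  have hr0 : r ≠ 0 := by
    intro h; rw [h] at hr2; simp at hr2
  have hcr : starRingEnd ℂ r⁻¹ = r⁻¹ := by
    rw [map_inv₀, hr, Complex.conj_ofReal]
  have hH : Ham M Ω (r⁻¹ • ((Pi.single S (1:ℂ) : FockSpace M) + (Pi.single T (1:ℂ) : FockSpace M)))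
      = r⁻¹ • (ES • (Pi.single S (1:ℂ) : FockSpace M) + ET • (Pi.single T (1:ℂ) : FockSpace M)) := by
    rw [map_smul, map_add, ham_single, ham_single]
  have hHH : Ham M Ω (r⁻¹ • (ES • (Pi.single S (1:ℂ) : FockSpace M) + ET • (Pi.single T (1:ℂ) : FockSpace M)))
      = r⁻¹ • ((ES * ES) • (Pi.single S (1:ℂ) : FockSpace M) + (ET * ET) • (Pi.single T (1:ℂ) : FockSpace M)) := by
    rw [map_smul, map_add, map_smul, map_smul, ham_single, ham_single, smul_smul, smul_smul]
  have hval : ∀ (a b : ℂ),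
      fockInner (r⁻¹ • ((Pi.single S (1:ℂ) : FockSpace M) + (Pi.single T (1:ℂ) : FockSpace M)))
        (r⁻¹ • (a • (Pi.single S (1:ℂ) : FockSpace M) + b • (Pi.single T (1:ℂ) : FockSpace M)))
      = r⁻¹ * (r⁻¹ * (a + b)) := by
    intro a b
    rw [fockInner_smul_left, fockInner_add_left, fockInner_single_left, fockInner_single_left, hcr]
    simp [Pi.single_apply, hST, Ne.symm hST, mul_add]
  rw [hH, hHH, hval, hval]
  have h2 : r⁻¹ * r⁻¹ = 2⁻¹ := by
    rw [← mul_inv, hr2]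
  rw [← mul_assoc, ← mul_assoc, h2]
  ring


/-- for the NOON-like fermion state `Φ = (e_{S₁} + e_{S₂})/√2`, with
`S₁` the first `N` modes and `S₂` the modes `m, …, m+N−1`, the quantum Fisher
information (four times the variance) of `H = ∑_k Ω_k a_k† a_k` equals
`(∑_{k<N} (Ω_{m+k} − Ω_k))²`. -/
theorem fisher_information_noon_state (M m N : ℕ) (hN : N ≤ m) (hM : m + N ≤ M)
    (Ω : Fin M → ℝ) :
    (fun Φ : FockSpace M =>
      4 * (fockInner Φ (Ham M Ω (Ham M Ω Φ)) - (fockInner Φ (Ham M Ω Φ)) ^ 2))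
      (((Real.sqrt 2 : ℝ) : ℂ)⁻¹ •
        ((Pi.single (Finset.univ.filter fun k : Fin M => (k : ℕ) < N) (1 : ℂ) : FockSpace M)
          + (Pi.single (Finset.univ.filter fun k : Fin M =>
              m ≤ (k : ℕ) ∧ (k : ℕ) < m + N) (1 : ℂ) : FockSpace M)))
      = (((∑ k : Fin N, (Ω ⟨m + k.1, by have := k.isLt; omega⟩
            - Ω ⟨k.1, by have := k.isLt; omega⟩)) ^ 2 : ℝ) : ℂ) := by
  beta_reduce
  set S₁ : Finset (Fin M) := Finset.univ.filter fun k : Fin M => (k : ℕ) < N with hS₁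
  set S₂ : Finset (Fin M) := Finset.univ.filter fun k : Fin M => m ≤ (k : ℕ) ∧ (k : ℕ) < m + N with hS₂
  rcases Nat.eq_zero_or_pos N with h0 | hpos
  · subst h0
    have h1 : S₁ = ∅ := by
      ext k
      simp only [hS₁, Finset.mem_filter, Finset.mem_univ, true_and, Finset.notMem_empty,
        iff_false]
      omega
    have h2 : S₂ = ∅ := by
      ext k
      simp only [hS₂, Finset.mem_filter, Finset.mem_univ, true_and, Finset.notMem_empty,
        iff_false]
      omega
    have hz : Ham M Ω (Pi.single (∅ : Finset (Fin M)) (1:ℂ) : FockSpace M) = 0 := by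
      rw [ham_single]; simp
    rw [h1, h2, map_smul, map_add, hz]
    simp [fockInner]
  · have hne : S₁ ≠ S₂ := by
      intro h
      have h0M : 0 < M := by omega
      have h01 : (⟨0, h0M⟩ : Fin M) ∈ S₁ := by
        simp only [hS₁, Finset.mem_filter, Finset.mem_univ, true_and]; omega
      rw [h] at h01
      simp only [hS₂, Finset.mem_filter, Finset.mem_univ, true_and] at h01
      omega
    rw [key Ω S₁ S₂ hne]
    have hmap1 : S₁ = Finset.univ.map
        ⟨fun k : Fin N => (⟨k.1, by have := k.isLt; omega⟩ : Fin M),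
          show Function.Injective _ from fun a b hab => by have := hab; simp only [Fin.mk.injEq] at this; exact Fin.ext this⟩ := by
      ext k
      simp only [hS₁, Finset.mem_filter, Finset.mem_univ, true_and, Finset.mem_map,
        Function.Embedding.coeFn_mk]
      constructor
      · intro hk; exact ⟨⟨k.1, hk⟩, Fin.ext rfl⟩
      · rintro ⟨a, rfl⟩; exact a.isLt
    have hmap2 : S₂ = Finset.univ.map
        ⟨fun k : Fin N => (⟨m + k.1, by have := k.isLt; omega⟩ : Fin M),
          show Function.Injective _ from fun a b hab => by
            have := hab; simp only [Fin.mk.injEq] at this; exact Fin.ext (by omega)⟩ := by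
      ext k
      simp only [hS₂, Finset.mem_filter, Finset.mem_univ, true_and, Finset.mem_map,
        Function.Embedding.coeFn_mk]
      constructor
      · intro hk; exact ⟨⟨k.1 - m, by omega⟩, Fin.ext (by simp; omega)⟩
      · rintro ⟨a, rfl⟩
        have := a.isLt
        simp only [Fin.val_mk]
        omega
    rw [hmap1, hmap2, Finset.sum_map, Finset.sum_map]
    simp only [Function.Embedding.coeFn_mk]
    push_cast [Finset.sum_sub_distrib]
    ring
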